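/- For m a positive integer, define linear maps on the space of doubly-infinite band operators with Laurent-polynomial coefficients in q^γ by δ_m^+ = (q/(abcd(1-q^{2m})))(λ_Λ - q^m ρ_Λ) + (1 + q/(abcd))(1/(1+q^m)) Id, where λ_Λ (resp. ρ_Λ) denotes left (resp. right) multiplication by the diagonal operator Λ_γ = q^{-γ}(1-q^γ)(1-abcd q^{γ-1}). Then δ_m^+(E^m) = q^γ E^m, i.e., applying δ_m^+ to the m-th shift operator yields multiplication by q^γ followed by the m-th shift. -/

import Mathlib

/-- `δ_m⁺(E^m) = q^γ E^m`: applying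
`δ_m⁺ = (q/(abcd(1-q^{2m})))(λ_Λ - q^m ρ_Λ) + (1 + q/(abcd))(1/(1+q^m)) Id`
to the `m`-th shift operator yields multiplication by `q^γ` followed by the
`m`-th shift. -/
theorem delta_plus_on_shift
    (q : ℝ) (hq : 0 < q) (hq1 : q < 1)
    (a b c d : ℂ) (habcd : a * b * c * d ≠ 0)
    (m : ℕ) (hm : 1 ≤ m)
    (Λ : ℤ → ℂ)
    (hΛ : ∀ γ : ℤ, Λ γ = (q:ℂ)^(-γ) * (1 - (q:ℂ)^γ) * (1 - a*b*c*d*(q:ℂ)^(γ-1))) :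
    ∀ (h : ℤ → ℂ) (γ : ℤ),
      ((q:ℂ) / (a*b*c*d * (1 - (q:ℂ)^(2*m)))) *
          (Λ γ * h (γ + m) - (q:ℂ)^m * (Λ (γ + m) * h (γ + m)))
        + (1 + (q:ℂ)/(a*b*c*d)) * (1/(1 + (q:ℂ)^m)) * h (γ + m)
      = (q:ℂ)^γ * h (γ + m) := by
  intro h γ
  have hq0 : (q:ℂ) ≠ 0 := by exact_mod_cast hq.ne'
  have hmR : q ^ m < 1 := pow_lt_one₀ hq.le hq1 (by omega)
  have hm1 : (1 - (q:ℂ)^m) ≠ 0 := by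
    have : ((1:ℝ) - q^m) ≠ 0 := by linarith
    exact_mod_cast this
  have h1m : (1 + (q:ℂ)^m) ≠ 0 := by
    have : (0:ℝ) < 1 + q^m := by positivity
    exact_mod_cast this.ne'
  have hX : (q:ℂ)^γ ≠ 0 := zpow_ne_zero _ hq0
  have hP : (q:ℂ)^m ≠ 0 := pow_ne_zero _ hq0
  rw [hΛ, hΛ, show 2*m = m*2 by ring, pow_mul,
    show (1 : ℂ) - ((q:ℂ)^m)^2 = (1 - (q:ℂ)^m) * (1 + (q:ℂ)^m) by ring]
  simp only [neg_add, zpow_add₀ hq0, zpow_sub₀ hq0, zpow_neg, zpow_one, zpow_natCast]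
  generalize (q:ℂ)^γ = X at hX ⊢
  generalize (q:ℂ)^m = P at hm1 h1m hP ⊢
  generalize h (γ + (m:ℤ)) = x
  have hD : (q:ℂ)^2 * X^2 * a*b*c*d * P - (q:ℂ)^2 * X^2 * a*b*c*d * P^3 ≠ 0 := by
    have e : (q:ℂ)^2 * X^2 * a*b*c*d * P - (q:ℂ)^2 * X^2 * a*b*c*d * P^3
        = ((q:ℂ)^2 * X^2) * (a*b*c*d) * P * ((1 - P) * (1 + P)) := by ring
    rw [e]
    exact mul_ne_zero (mul_ne_zero (mul_ne_zero
      (mul_ne_zero (pow_ne_zero _ hq0) (pow_ne_zero _ hX)) habcd) hP)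
      (mul_ne_zero hm1 h1m)
  field_simp
  have hB : a*b*c*d * ((1 - P)*(1 + P)) * (X * (q:ℂ) * (X * P * (q:ℂ))) ≠ 0 := by
    refine mul_ne_zero (mul_ne_zero habcd (mul_ne_zero hm1 h1m)) ?_
    exact mul_ne_zero (mul_ne_zero hX hq0) (mul_ne_zero (mul_ne_zero hX hP) hq0)
  rw [div_add' _ _ _ habcd, mul_div_assoc', div_eq_iff habcd]
  have hD' : (q:ℂ)/(a*b*c*d)*(a*b*c*d) = q := div_mul_cancel₀ _ habcd
  linear_combination (x*(1-P)*X) * hD'
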